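/- For all n ≥ 0, the Hankel determinant of the even-indexed Euler numbers satisfies Hₙ(E_{2k}) = ∏_{ℓ=1}^n ((2ℓ−1)²(2ℓ)²)^{n+1−ℓ}. -/

import Mathlib

/-- The Hankel determinant `Hₙ(c) = det (c_{i+j})_{0 ≤ i,j ≤ n}`. -/
def hankel (c : ℕ → ℚ) (n : ℕ) : ℚ :=
  Matrix.det (Matrix.of fun i j : Fin (n + 1) => c (i.1 + j.1))

/-- Evaluation `Eₙ(x)` of the Euler polynomials, defined by the recurrence
`Eₙ(x) = xⁿ - (1/2) ∑_{k<n} C(n,k) Eₖ(x)`, equivalent to the generating function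
`2e^{xt}/(e^t+1) = ∑ Eₙ(x) tⁿ/n!`. -/
def eulerEval (x : ℚ) : ℕ → ℚ :=
  WellFounded.fix Nat.lt_wfRel.wf fun n E =>
    x ^ n - 2⁻¹ * ∑ k : Fin n, (n.choose k : ℚ) * E k k.2

/-- The Euler numbers `Eₙ = 2ⁿ Eₙ(1/2)`, with generating function `2/(e^t+e^{-t})`. -/
def eulerNumber (n : ℕ) : ℚ := 2 ^ n * eulerEval (1 / 2) n

lemma eulerEval_eq (x : ℚ) (n : ℕ) :
    eulerEval x n = x ^ n - 2⁻¹ * ∑ k ∈ Finset.range n, (n.choose k : ℚ) * eulerEval x k := by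
  conv_lhs => rw [eulerEval, WellFounded.fix_eq]
  rw [← Fin.sum_univ_eq_sum_range (fun k => (n.choose k : ℚ) * eulerEval x k) n]
  rfl

lemma eulerNumber_zero : eulerNumber 0 = 1 := by
  rw [eulerNumber, eulerEval_eq]; simp

lemma euler_sum (n : ℕ) :
    ∑ k ∈ Finset.range (n+1), (n.choose k : ℚ) * 2 ^ (n - k) * eulerNumber k + eulerNumber n = 2 := by
  have h := eulerEval_eq (1/2) n
  have h2 : eulerNumber n = 1 - 2⁻¹ * ∑ k ∈ Finset.range n, (n.choose k : ℚ) * 2 ^ (n - k) * eulerNumber k := by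
    rw [eulerNumber, h, mul_sub]
    have h1 : (2:ℚ)^n * (1/2)^n = 1 := by rw [← mul_pow]; norm_num
    rw [h1]
    congr 1
    rw [← mul_assoc, mul_comm ((2:ℚ)^n) 2⁻¹, mul_assoc, Finset.mul_sum, Finset.mul_sum]
    rw [Finset.mul_sum]
    apply Finset.sum_congr rfl
    intro k hk
    rw [Finset.mem_range] at hk
    rw [eulerNumber]
    have : (2:ℚ)^n = 2^(n-k) * 2^k := by rw [← pow_add]; congr 1; omega
    rw [this]; ring
  rw [Finset.sum_range_succ]
  simp only [Nat.choose_self, Nat.cast_one, Nat.sub_self, pow_zero]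
  rw [h2]; ring


open PowerSeries

noncomputable section

def ES : PowerSeries ℚ := PowerSeries.mk fun n => eulerNumber n / n.factorial

def RE : PowerSeries ℚ := rescale (-1) (exp ℚ)

def Ch : PowerSeries ℚ := (2:ℚ)⁻¹ • (exp ℚ + RE)
def Sh : PowerSeries ℚ := (2:ℚ)⁻¹ • (exp ℚ - RE)

lemma derivExp : d⁄dX ℚ (exp ℚ) = exp ℚ := by
  ext n
  rw [coeff_derivative, coeff_exp, coeff_exp]
  simp only [Algebra.algebraMap_self_apply, Nat.factorial_succ, Nat.cast_mul, Nat.cast_succ]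
  field_simp [Nat.factorial_succ]

lemma deriv_RE : d⁄dX ℚ RE = -RE := by
  ext n
  rw [coeff_derivative, map_neg, RE, coeff_rescale, coeff_rescale, coeff_exp, coeff_exp]
  simp only [Algebra.algebraMap_self_apply, Nat.factorial_succ, Nat.cast_mul, Nat.cast_succ]
  field_simp [Nat.factorial_succ, pow_succ]
  push_cast
  ring

lemma deriv_Ch : d⁄dX ℚ Ch = Sh := by
  rw [Ch, Sh, Derivation.map_smul, map_add, derivExp, deriv_RE]
  module

lemma deriv_Sh : d⁄dX ℚ Sh = Ch := by
  rw [Ch, Sh, Derivation.map_smul, map_sub, derivExp, deriv_RE]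
  module

lemma euler_sum' (n : ℕ) :
    ∑ k ∈ Finset.range (n+1), (n.choose k : ℚ) * 2 ^ (n - k) * eulerNumber k = 2 - eulerNumber n := by
  have := euler_sum n
  linarith

lemma serId : ES * (rescale 2 (exp ℚ)) + ES = (2:ℚ) • exp ℚ := by
  ext n
  rw [map_add, map_smul, PowerSeries.coeff_mul, Finset.Nat.sum_antidiagonal_eq_sum_range_succ_mk]
  simp only [ES, coeff_mk, coeff_rescale, coeff_exp, Algebra.algebraMap_self, RingHom.id_apply,
    smul_eq_mul]
  have h : ∀ k ∈ Finset.range (n+1),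
      eulerNumber k / (k.factorial : ℚ) * (2 ^ (n - k) * (1 / ((n-k).factorial : ℚ)))
        = (n.choose k : ℚ) * 2 ^ (n - k) * eulerNumber k * ((n.factorial : ℚ))⁻¹ := by
    intro k hk
    rw [Finset.mem_range] at hk
    have hk' : k ≤ n := by omega
    have hc : (n.choose k : ℚ) = (n.factorial : ℚ) / ((k.factorial : ℚ) * ((n-k).factorial : ℚ)) :=
      Nat.cast_choose ℚ hk'
    have h1 : ((k.factorial : ℚ)) ≠ 0 := Nat.cast_ne_zero.2 k.factorial_ne_zero
    have h2 : (((n-k).factorial : ℚ)) ≠ 0 := Nat.cast_ne_zero.2 (n-k).factorial_ne_zero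
    have h3 : ((n.factorial : ℚ)) ≠ 0 := Nat.cast_ne_zero.2 n.factorial_ne_zero
    rw [hc]
    field_simp
  rw [Finset.sum_congr rfl h, ← Finset.sum_mul, euler_sum' n]
  have h3 : ((n.factorial : ℚ)) ≠ 0 := Nat.cast_ne_zero.2 n.factorial_ne_zero
  field_simp
  ring

lemma ES_mul_Ch : ES * Ch = 1 := by
  have hexp : rescale 2 (exp ℚ) * RE = exp ℚ := by
    rw [RE, exp_mul_exp_eq_exp_add (2:ℚ) (-1)]
    norm_num [rescale_one]
  have hone : exp ℚ * RE = 1 := exp_mul_exp_neg_eq_one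
  have key : ES * (exp ℚ + RE) = 2 := by
    calc ES * (exp ℚ + RE) = ES * (rescale 2 (exp ℚ) * RE + RE) := by rw [hexp]
    _ = (ES * rescale 2 (exp ℚ) + ES) * RE := by ring
    _ = ((2:ℚ) • exp ℚ) * RE := by rw [serId]
    _ = (2:ℚ) • (exp ℚ * RE) := by rw [smul_mul_assoc]
    _ = 2 := by
        rw [hone, smul_eq_C_mul, ← map_ofNat (PowerSeries.C (R := ℚ)) 2, mul_one]
  rw [Ch, smul_eq_C_mul]
  calc ES * (PowerSeries.C (2⁻¹ : ℚ) * (exp ℚ + RE)) = PowerSeries.C (2⁻¹ : ℚ) * (ES * (exp ℚ + RE)) := by ring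
  _ = PowerSeries.C (2⁻¹ : ℚ) * 2 := by rw [key]
  _ = 1 := by
      rw [← map_ofNat (PowerSeries.C (R := ℚ)) 2, ← map_mul]
      norm_num

def T : PowerSeries ℚ := ES * Sh

lemma deriv_ES : d⁄dX ℚ ES = -(ES * T) := by
  have h1 : ES • (d⁄dX ℚ Ch) + Ch • (d⁄dX ℚ ES) = 0 := by
    rw [← Derivation.leibniz, ES_mul_Ch]
    exact Derivation.map_one_eq_zero _
  rw [deriv_Ch, smul_eq_mul, smul_eq_mul] at h1
  have h2 : Ch * d⁄dX ℚ ES = -(ES * Sh) := by linear_combination h1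
  calc d⁄dX ℚ ES = (ES * Ch) * d⁄dX ℚ ES := by rw [ES_mul_Ch, one_mul]
  _ = ES * (Ch * d⁄dX ℚ ES) := by ring
  _ = -(ES * T) := by rw [h2, T]; ring

lemma deriv_T : d⁄dX ℚ T = 1 - T^2 := by
  rw [T, Derivation.leibniz, deriv_Sh, deriv_ES, smul_eq_mul, smul_eq_mul, ES_mul_Ch]
  rw [T]; ring

def G (k : ℕ) : PowerSeries ℚ := ((-1:ℚ)^k * (k.factorial : ℚ)) • (ES * T^k)

lemma deriv_G (k : ℕ) : d⁄dX ℚ (G k) = G (k+1) - ((k:ℚ)^2) • G (k-1) := by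
  cases k with
  | zero =>
    simp only [G, pow_zero, Nat.factorial_zero, Nat.cast_one, mul_one, one_smul, one_mul,
      Nat.cast_zero, ne_eq, pow_one, Nat.factorial_one]
    rw [deriv_ES]
    norm_num
  | succ j =>
    have hd : d⁄dX ℚ (ES * T^(j+1))
        = ((j+1 : ℚ)) • (ES * T^j) - ((j+2 : ℚ)) • (ES * T^(j+2)) := by
      rw [Derivation.leibniz, Derivation.leibniz_pow, deriv_T, deriv_ES]
      simp only [smul_eq_mul, nsmul_eq_mul, smul_eq_C_mul, map_add, map_natCast, map_ofNat,
        map_one, Nat.add_sub_cancel]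
      push_cast
      ring
    simp only [G, Nat.add_sub_cancel]
    rw [Derivation.map_smul, hd]
    simp only [smul_sub, smul_smul, smul_eq_C_mul, map_mul, map_pow, map_neg, map_one, map_natCast, map_add, map_ofNat]
    push_cast [Nat.factorial_succ]
    ring

def bb (k : ℕ) : ℚ := -((k:ℚ))^2

def tt (m k : ℕ) : ℚ := (m.factorial : ℚ) * PowerSeries.coeff m (G k)

lemma tt_rec (m k : ℕ) : tt (m+1) k = tt m (k+1) + bb k * tt m (k-1) := by
  have hc := congrArg (PowerSeries.coeff m) (deriv_G k)
  rw [coeff_derivative, map_sub, map_smul, smul_eq_mul] at hc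
  simp only [tt, bb, Nat.factorial_succ]
  push_cast
  linear_combination ((m.factorial : ℚ)) * hc

lemma constCoeff_Sh : PowerSeries.constantCoeff (R := ℚ) Sh = 0 := by
  rw [Sh, smul_eq_C_mul, map_mul, constantCoeff_C, map_sub, constantCoeff_exp, RE]
  rw [← coeff_zero_eq_constantCoeff_apply, coeff_rescale, coeff_zero_eq_constantCoeff_apply,
    constantCoeff_exp]
  norm_num

lemma constCoeff_ES : PowerSeries.constantCoeff (R := ℚ) ES = 1 := by
  rw [ES, ← coeff_zero_eq_constantCoeff_apply, coeff_mk, eulerNumber_zero]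
  norm_num

lemma tt_zero (k : ℕ) : tt 0 k = if k = 0 then 1 else 0 := by
  rw [tt, Nat.factorial_zero, coeff_zero_eq_constantCoeff_apply, G, smul_eq_C_mul, map_mul,
    constantCoeff_C, map_mul, map_pow, constCoeff_ES, T, map_mul, constCoeff_ES, constCoeff_Sh]
  cases k with
  | zero => norm_num
  | succ j => simp [zero_pow]

lemma tt_m0 (m : ℕ) : tt m 0 = eulerNumber m := by
  have hG : G 0 = ES := by
    rw [G]; norm_num
  rw [tt, hG, ES, coeff_mk]
  have h3 : ((m.factorial : ℚ)) ≠ 0 := Nat.cast_ne_zero.2 m.factorial_ne_zero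
  field_simp

def uu : ℕ → ℕ → ℚ
  | 0, k => if k = 0 then 1 else 0
  | (m+1), k => (if k = 0 then 0 else uu m (k-1)) + bb (k+1) * uu m (k+1)

def dd (k : ℕ) : ℚ := ∏ j ∈ Finset.Icc 1 k, bb j

lemma dd_zero : dd 0 = 1 := by simp [dd]

lemma dd_succ (k : ℕ) : dd (k+1) = dd k * bb (k+1) := by
  rw [dd, dd, ← Finset.prod_Icc_succ_top (by omega : 1 ≤ k + 1)]

lemma tt_ud (m k : ℕ) : tt m k = uu m k * dd k := by
  induction m generalizing k with
  | zero =>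
    rw [tt_zero, uu]
    by_cases h : k = 0
    · subst h; simp [dd_zero]
    · simp [h]
  | succ m ih =>
    rw [tt_rec, ih, ih, uu]
    cases k with
    | zero => simp [bb, dd_succ, dd_zero]
    | succ j =>
      simp only [Nat.add_sub_cancel, if_neg (Nat.succ_ne_zero j)]
      rw [dd_succ (j+1), dd_succ j]
      ring

lemma uu_tri {m k : ℕ} (h : m < k) : uu m k = 0 := by
  induction m generalizing k with
  | zero => rw [uu, if_neg (by omega : k ≠ 0)]
  | succ m ih =>
    rw [uu, ih (by omega : m < k + 1), mul_zero, add_zero]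
    by_cases hk : k = 0
    · simp [hk]
    · rw [if_neg hk, ih (by omega)]

lemma uu_diag (m : ℕ) : uu m m = 1 := by
  induction m with
  | zero => rw [uu]; simp
  | succ m ih =>
    rw [uu, if_neg (Nat.succ_ne_zero m), Nat.add_sub_cancel, ih,
      uu_tri (by omega : m < m + 2), mul_zero, add_zero]

lemma uu_parity : ∀ m k : ℕ, (m + k) % 2 = 1 → uu m k = 0 := by
  intro m
  induction m with
  | zero =>
    intro k h
    rw [uu, if_neg (by omega : k ≠ 0)]
  | succ m ih =>
    intro k h
    rw [uu, ih (k+1) (by omega), mul_zero, add_zero]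
    by_cases hk : k = 0
    · simp [hk]
    · rw [if_neg hk, ih (k-1) (by omega)]

lemma key : ∀ i j N : ℕ, i ≤ N → ∑ k ∈ Finset.range (N+1), uu i k * tt j k = eulerNumber (i + j) := by
  intro i
  induction i with
  | zero =>
    intro j N _
    rw [Finset.sum_eq_single_of_mem 0 (Finset.mem_range.mpr (by omega))]
    · rw [uu, if_pos rfl, one_mul, tt_m0, Nat.zero_add]
    · intro k _ hk
      rw [uu, if_neg hk, zero_mul]
  | succ i ih =>
    intro j N hN
    have key1 : ∑ k ∈ Finset.range (N+1), uu (i+1) k * tt j k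
        = (∑ k ∈ Finset.range N, uu i k * tt j (k+1))
          + ∑ k ∈ Finset.range (N+1), bb (k+1) * (uu i (k+1) * tt j k) := by
      have hsp : ∀ k ∈ Finset.range (N+1), uu (i+1) k * tt j k
          = (if k = 0 then 0 else uu i (k-1)) * tt j k + bb (k+1) * (uu i (k+1) * tt j k) := by
        intro k _
        rw [uu]; ring
      rw [Finset.sum_congr rfl hsp, Finset.sum_add_distrib]
      congr 1
      rw [Finset.sum_range_succ']
      simp only [Nat.add_sub_cancel, if_neg (Nat.succ_ne_zero _), if_pos, zero_mul, add_zero]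
    have key2 : ∑ k ∈ Finset.range (N+1), bb (k+1) * (uu i (k+1) * tt j k)
        = ∑ k ∈ Finset.range N, bb (k+1) * (uu i (k+1) * tt j k) := by
      rw [Finset.sum_range_succ, uu_tri (show i < N + 1 by omega)]
      ring
    have expand : ∑ k ∈ Finset.range (N+1), uu i k * tt (j+1) k
        = (∑ k ∈ Finset.range (N+1), uu i k * tt j (k+1))
          + ∑ k ∈ Finset.range (N+1), uu i k * (bb k * tt j (k-1)) := by
      rw [← Finset.sum_add_distrib]
      refine Finset.sum_congr rfl fun k _ => ?_
      rw [tt_rec]; ring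
    have e1 : ∑ k ∈ Finset.range (N+1), uu i k * tt j (k+1)
        = ∑ k ∈ Finset.range N, uu i k * tt j (k+1) := by
      rw [Finset.sum_range_succ, uu_tri (show i < N by omega), zero_mul, add_zero]
    have e2 : ∑ k ∈ Finset.range (N+1), uu i k * (bb k * tt j (k-1))
        = ∑ k ∈ Finset.range N, bb (k+1) * (uu i (k+1) * tt j k) := by
      rw [Finset.sum_range_succ']
      have hb0 : bb 0 = 0 := by norm_num [bb]
      rw [hb0, zero_mul, mul_zero, add_zero]
      refine Finset.sum_congr rfl fun k _ => ?_
      simp only [Nat.add_sub_cancel]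
      ring
    rw [key1, key2, ← e1, ← e2, ← expand, ih (j+1) N (by omega)]
    congr 1
    omega

lemma sum_even (f : ℕ → ℚ) (h : ∀ k, k % 2 = 1 → f k = 0) (N : ℕ) :
    ∑ k ∈ Finset.range (2*N), f k = ∑ κ ∈ Finset.range N, f (2*κ) := by
  induction N with
  | zero => simp
  | succ N ih =>
    rw [show 2*(N+1) = (2*N+1)+1 by omega, Finset.sum_range_succ, Finset.sum_range_succ,
      h (2*N+1) (by omega), add_zero, Finset.sum_range_succ, ih]

lemma key_even (n i j : ℕ) (hi : i ≤ n) :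
    eulerNumber (2*i + 2*j) = ∑ κ ∈ Finset.range (n+1), uu (2*i) (2*κ) * tt (2*j) (2*κ) := by
  rw [← key (2*i) (2*j) (2*n+1) (by omega)]
  rw [show (2*n+1)+1 = 2*(n+1) by omega]
  have hodd : ∀ k, k % 2 = 1 → uu (2*i) k * tt (2*j) k = 0 := by
    intro k hk
    rw [uu_parity (2*i) k (by omega), zero_mul]
  exact sum_even (fun k => uu (2*i) k * tt (2*j) k) hodd (n+1)

def Umat (n : ℕ) : Matrix (Fin (n+1)) (Fin (n+1)) ℚ :=
  Matrix.of fun i κ => uu (2*i.1) (2*κ.1)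

def Dmat (n : ℕ) : Matrix (Fin (n+1)) (Fin (n+1)) ℚ :=
  Matrix.diagonal fun κ => dd (2*κ.1)

lemma myFactorization (n : ℕ) :
    (Matrix.of fun i j : Fin (n+1) => eulerNumber (2*(i.1+j.1)))
      = Umat n * Dmat n * (Umat n).transpose := by
  ext i j
  rw [Matrix.mul_apply]
  simp only [Umat, Dmat, Matrix.mul_diagonal, Matrix.transpose_apply, Matrix.of_apply]
  rw [show 2*(i.1+j.1) = 2*i.1 + 2*j.1 by ring, key_even n i.1 j.1 (by omega)]
  rw [← Fin.sum_univ_eq_sum_range (fun κ => uu (2*i.1) (2*κ) * tt (2*j.1) (2*κ)) (n+1)]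
  refine Finset.sum_congr rfl fun κ _ => ?_
  rw [tt_ud]
  ring

lemma det_Umat (n : ℕ) : (Umat n).det = 1 := by
  rw [Matrix.det_of_lowerTriangular (Umat n)]
  · rw [Finset.prod_eq_one]
    intro κ _
    exact uu_diag (2*κ.1)
  · intro i j hij
    exact uu_tri (by simp at hij; omega)

lemma hankel_eq_prod (n : ℕ) :
    hankel (fun k => eulerNumber (2 * k)) n = ∏ κ : Fin (n+1), dd (2*κ.1) := by
  rw [hankel]
  have : (Matrix.of fun i j : Fin (n + 1) => eulerNumber (2 * (i.1 + j.1)))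
      = Umat n * Dmat n * (Umat n).transpose := myFactorization n
  rw [this, Matrix.det_mul, Matrix.det_mul, Matrix.det_transpose, det_Umat, Dmat,
    Matrix.det_diagonal]
  ring

lemma dd_even (κ : ℕ) :
    dd (2*κ) = ∏ ℓ ∈ Finset.Icc 1 κ, ((2 * (ℓ : ℚ) - 1) ^ 2 * (2 * (ℓ : ℚ)) ^ 2) := by
  induction κ with
  | zero => simp [dd_zero]
  | succ κ ih =>
    rw [show 2*(κ+1) = (2*κ+1)+1 by omega, dd_succ, dd_succ, ih,
      Finset.prod_Icc_succ_top (by omega : 1 ≤ κ + 1)]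
    have : bb (2*κ+1) * bb (2*κ+1+1) = (2 * ((κ:ℚ)+1) - 1) ^ 2 * (2 * ((κ:ℚ)+1)) ^ 2 := by
      simp only [bb]
      push_cast
      ring
    rw [mul_assoc, this]
    push_cast
    ring

lemma prod_swap (f : ℕ → ℚ) (n : ℕ) :
    ∏ κ ∈ Finset.range (n+1), (∏ ℓ ∈ Finset.Icc 1 κ, f ℓ)
      = ∏ ℓ ∈ Finset.Icc 1 n, (f ℓ) ^ (n + 1 - ℓ) := by
  induction n with
  | zero => simp
  | succ n ih =>
    rw [Finset.prod_range_succ, ih]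
    have step : ∏ ℓ ∈ Finset.Icc 1 (n+1), (f ℓ) ^ (n + 1 + 1 - ℓ)
        = (∏ ℓ ∈ Finset.Icc 1 (n+1), (f ℓ) ^ (n + 1 - ℓ)) * ∏ ℓ ∈ Finset.Icc 1 (n+1), f ℓ := by
      rw [← Finset.prod_mul_distrib]
      refine Finset.prod_congr rfl fun ℓ hℓ => ?_
      rw [Finset.mem_Icc] at hℓ
      rw [← pow_succ]
      congr 1
      omega
    rw [step, Finset.prod_Icc_succ_top (by omega : 1 ≤ n + 1) (fun ℓ => f ℓ ^ (n + 1 - ℓ)),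
      Nat.sub_self, pow_zero, mul_one, Finset.prod_Icc_succ_top (by omega : 1 ≤ n + 1) f]

theorem hankel_even_eulerNumber (n : ℕ) :
    hankel (fun k => eulerNumber (2 * k)) n
      = ∏ ℓ ∈ Finset.Icc 1 n, ((2 * (ℓ : ℚ) - 1) ^ 2 * (2 * (ℓ : ℚ)) ^ 2) ^ (n + 1 - ℓ) := by
  rw [hankel_eq_prod, Fin.prod_univ_eq_prod_range (fun κ => dd (2*κ)) (n+1),
    Finset.prod_congr rfl (fun κ _ => dd_even κ)]
  exact prod_swap _ n
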